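/- Let W : [0,∞) → ℝ be C¹ with W(0) = 0 and W(s) ≥ 0 for all s ≥ 0. If U ∈ H^1(ℝ^N) ∩ C²(ℝ^N), N ≥ 3, is a radial solution of -ΔU + W'(U) = 2ωU with ω ≤ 0 decaying at infinity along with its gradient, then U ≡ 0. -/

import Mathlib

open MeasureTheory Real Filter

open RealInnerProductSpace

lemma lineDeriv' {E : Type*} [NormedAddCommGroup E] [NormedSpace ℝ E]
    (g : E → ℝ) (hg : Differentiable ℝ g) (p v : E) (t : ℝ) :
    HasDerivAt (fun s : ℝ => g (p + s • v)) (fderiv ℝ g (p + t • v) v) t := by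
  have hline : HasDerivAt (fun s : ℝ => p + s • v) v t := by
    simpa using ((hasDerivAt_id t).smul_const v).const_add p
  exact ((hg _).hasFDerivAt).comp_hasDerivAt t hline

lemma lineDeriv2' {E : Type*} [NormedAddCommGroup E] [NormedSpace ℝ E]
    (g : E → ℝ) (hg : ContDiff ℝ 2 g) (p v w : E) (t : ℝ) :
    HasDerivAt (fun s : ℝ => fderiv ℝ g (p + s • v) w)
      (fderiv ℝ (fderiv ℝ g) (p + t • v) v w) t := by
  have hfd : ContDiff ℝ 1 (fderiv ℝ g) := hg.fderiv_right (by norm_num)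
  have hline : HasDerivAt (fun s : ℝ => p + s • v) v t := by
    simpa using ((hasDerivAt_id t).smul_const v).const_add p
  have hD : HasFDerivAt (fun y => fderiv ℝ g y w)
      ((ContinuousLinearMap.apply ℝ ℝ w).comp (fderiv ℝ (fderiv ℝ g) (p + t • v)))
      (p + t • v) :=
    (ContinuousLinearMap.apply ℝ ℝ w).hasFDerivAt.comp _
      ((hfd.differentiable (by norm_num) _).hasFDerivAt)
  exact hD.comp_hasDerivAt t hline


/-- The Laplacian of a (twice differentiable) function on `ℝ^N`. -/
noncomputable def lapR (N : ℕ) (f : EuclideanSpace ℝ (Fin N) → ℝ)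
    (x : EuclideanSpace ℝ (Fin N)) : ℝ :=
  ∑ j : Fin N, iteratedFDeriv ℝ 2 f x ![EuclideanSpace.single j 1, EuclideanSpace.single j 1]

/-- Pohozaev-type nonexistence: if `W ≥ 0`, `W(0) = 0`, `ω ≤ 0` and `U ∈ H¹ ∩ C²` is a
radial solution of `-ΔU + W'(U) = 2ωU` decaying at infinity together with its gradient,
then `U ≡ 0`. -/
theorem stmt_4 (N : ℕ) (hN : 3 ≤ N) (W : ℝ → ℝ) (hW : ContDiff ℝ 1 W)
    (hW0 : W 0 = 0) (hWpos : ∀ s : ℝ, 0 ≤ s → 0 ≤ W s)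
    (ω : ℝ) (hω : ω ≤ 0)
    (U : EuclideanSpace ℝ (Fin N) → ℝ)
    (hU2 : MemLp U 2 (volume : Measure (EuclideanSpace ℝ (Fin N))))
    (hUgrad : MemLp (fun x => ‖fderiv ℝ U x‖) 2 (volume : Measure (EuclideanSpace ℝ (Fin N))))
    (hUC2 : ContDiff ℝ 2 U)
    (hUnonneg : ∀ x, 0 ≤ U x)
    (hradial : ∀ x y : EuclideanSpace ℝ (Fin N), ‖x‖ = ‖y‖ → U x = U y)
    (hdecay : Tendsto U (cocompact (EuclideanSpace ℝ (Fin N))) (nhds 0))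
    (hdecay' : Tendsto (fun x => ‖fderiv ℝ U x‖) (cocompact (EuclideanSpace ℝ (Fin N))) (nhds 0))
    (heq : ∀ x, -lapR N U x + deriv W (U x) = 2 * ω * U x) :
    ∀ x, U x = 0 := by
  haveI : NeZero N := ⟨by omega⟩
  set e0 : EuclideanSpace ℝ (Fin N) := EuclideanSpace.single (0 : Fin N) 1 with he0
  have hUdiff : Differentiable ℝ U := hUC2.differentiable (by norm_num)
  set u : ℝ → ℝ := fun r => U (r • e0) with hu_def
  set u1 : ℝ → ℝ := fun r => fderiv ℝ U (r • e0) e0 with hu1_def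
  have hne0 : ‖e0‖ = 1 := by simp [he0]
  have hnsmul : ∀ r : ℝ, ‖r • e0‖ = |r| := fun r => by
    rw [norm_smul, hne0, mul_one]; rfl
  have hrad : ∀ x, U x = u ‖x‖ := fun x => by
    rw [hu_def]
    exact hradial x (‖x‖ • e0) (by rw [hnsmul, abs_of_nonneg (norm_nonneg x)])
  have hu' : ∀ r, HasDerivAt u (u1 r) r := fun r => by
    rw [hu_def, hu1_def]
    simpa using lineDeriv' U hUdiff 0 e0 r
  have huC2 : ContDiff ℝ 2 u := hUC2.comp (contDiff_id.smul contDiff_const)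
  have hu1' : ∀ r, HasDerivAt u1 (fderiv ℝ (fderiv ℝ U) (r • e0) e0 e0) r := fun r => by
    rw [hu1_def]
    simpa using lineDeriv2' U hUC2 0 e0 e0 r
  have hfd1 : ContDiff ℝ 1 (fderiv ℝ U) := hUC2.fderiv_right (by norm_num)
  have hu1cont : Continuous u1 := by
    rw [hu1_def]
    exact ((ContinuousLinearMap.apply ℝ ℝ e0).continuous.comp hfd1.continuous).comp
      (continuous_id.smul continuous_const)
  have heven : ∀ s : ℝ, u (-s) = u s := fun s => by
    rw [hu_def]; exact hradial _ _ (by rw [hnsmul, hnsmul, abs_neg])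
  -- off-diagonal second derivatives
  have hoff : ∀ r : ℝ, 0 < r → ∀ j : Fin N, j ≠ 0 →
      fderiv ℝ (fderiv ℝ U) (r • e0) (EuclideanSpace.single j 1)
        (EuclideanSpace.single j 1) = u1 r / r := by
    intro r hr j hj
    set ej : EuclideanSpace ℝ (Fin N) := EuclideanSpace.single j (1:ℝ) with hej
    have hnormv : ∀ s : ℝ, ‖r • e0 + s • ej‖ = Real.sqrt (r^2 + s^2) := by
      intro s
      have hi : ⟪(r • e0 : EuclideanSpace ℝ (Fin N)), s • ej⟫ = 0 := by
        rw [real_inner_smul_left, real_inner_smul_right, he0, hej,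
          EuclideanSpace.inner_single_left]
        simp [EuclideanSpace.single_apply, (Ne.symm hj)]
      have hsq : ‖r • e0 + s • ej‖^2 = r^2 + s^2 := by
        rw [norm_add_sq_real, hi]
        simp [norm_smul, he0, hej, mul_pow, sq_abs]
      rw [← hsq, Real.sqrt_sq (norm_nonneg _)]
    set ρ : ℝ → ℝ := fun s => Real.sqrt (r^2 + s^2) with hρ
    have hρpos : ∀ s : ℝ, 0 < r^2 + s^2 := fun s => by positivity
    have hsqrtpos : ∀ s : ℝ, 0 < ρ s := fun s => Real.sqrt_pos.2 (hρpos s)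
    have hρ' : ∀ s : ℝ, HasDerivAt ρ (s / ρ s) s := by
      intro s
      have h1 : HasDerivAt (fun s : ℝ => r^2 + s^2) (2*s) s := by
        simpa using ((hasDerivAt_pow 2 s).const_add (r^2))
      have h2 := (Real.hasDerivAt_sqrt (hρpos s).ne').comp s h1
      refine h2.congr_deriv ?_
      rw [hρ]
      field_simp
    have hρ0 : ρ 0 = r := by
      rw [hρ]; simp [Real.sqrt_sq hr.le]
    have hDval : ∀ t : ℝ, fderiv ℝ U (r • e0 + t • ej) ej = u1 (ρ t) * (t / ρ t) := by
      intro t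
      have h1 := lineDeriv' U hUdiff (r • e0) ej t
      have h2 : HasDerivAt (fun s => u (ρ s)) (u1 (ρ t) * (t / ρ t)) t :=
        (hu' (ρ t)).comp t (hρ' t)
      have hfe : (fun s : ℝ => U (r • e0 + s • ej)) = fun s => u (ρ s) :=
        funext fun s => by rw [hrad, hnormv]
      rw [hfe] at h1
      exact h1.unique h2
    have h3 : HasDerivAt (fun t : ℝ => fderiv ℝ U (r • e0 + t • ej) ej)
        (fderiv ℝ (fderiv ℝ U) (r • e0) ej ej) 0 := by
      simpa using lineDeriv2' U hUC2 (r • e0) ej ej 0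
    have h4 : HasDerivAt (fun t : ℝ => u1 (ρ t) * (t / ρ t)) (u1 r / r) 0 := by
      have ha : HasDerivAt (fun t => u1 (ρ t)) 0 0 := by
        have hx := hu1' r
        rw [← hρ0] at hx
        exact (hx.comp 0 (hρ' 0)).congr_deriv (by simp)
      have hb : HasDerivAt (fun t : ℝ => t / ρ t) (1 / r) 0 := by
        have hinv : HasDerivAt (fun t => (ρ t)⁻¹) (-(0 / ρ 0) / (ρ 0)^2) 0 :=
          (hρ' 0).inv (hsqrtpos 0).ne'
        have := (hasDerivAt_id 0).mul hinv
        simp only [div_eq_mul_inv]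
        refine this.congr_deriv ?_
        rw [hρ0]
        field_simp
        simp
      have := ha.mul hb
      exact this.congr_deriv (by simp [hρ0, mul_one_div, div_eq_mul_inv])
    rw [show (fun t : ℝ => fderiv ℝ U (r • e0 + t • ej) ej)
        = fun t => u1 (ρ t) * (t / ρ t) from funext hDval] at h3
    exact h3.unique h4
  -- Laplacian decomposition
  have hlap : ∀ r : ℝ, 0 < r → lapR N U (r • e0)
      = fderiv ℝ (fderiv ℝ U) (r • e0) e0 e0 + ((N:ℝ) - 1) * (u1 r / r) := by
    intro r hr
    rw [lapR]
    simp only [iteratedFDeriv_two_apply, Matrix.cons_val_zero, Matrix.cons_val_one,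
      Matrix.head_cons]
    rw [Fintype.sum_eq_add_sum_compl (0 : Fin N)]
    congr 1
    rw [Finset.sum_congr rfl (fun j hjmem => hoff r hr j (by
      simpa [Finset.mem_compl, Finset.mem_singleton] using hjmem))]
    rw [Finset.sum_const, nsmul_eq_mul]
    congr 1
    rw [Finset.card_compl, Finset.card_singleton, Fintype.card_fin]
    push_cast [Nat.cast_sub (by omega : 1 ≤ N)]
    ring
  -- the ODE
  have hODE : ∀ r : ℝ, 0 < r → fderiv ℝ (fderiv ℝ U) (r • e0) e0 e0
      = deriv W (u r) - 2*ω*u r - ((N:ℝ)-1) * (u1 r / r) := by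
    intro r hr
    have h := heq (r • e0)
    rw [hlap r hr] at h
    have hx : U (r • e0) = u r := by rw [hu_def]
    rw [hx] at h
    linarith
  -- the energy
  set En : ℝ → ℝ := fun r => u1 r ^ 2 / 2 + ω * u r ^ 2 - W (u r) with hEn_def
  have hWd : Differentiable ℝ W := hW.differentiable (by norm_num)
  have hEn' : ∀ r : ℝ, 0 < r → HasDerivAt En (-(((N:ℝ)-1) * u1 r ^ 2 / r)) r := by
    intro r hr
    have h1 := ((hu1' r).pow 2).div_const 2
    have h2 := ((hu' r).pow 2).const_mul ω
    have h3 : HasDerivAt (fun s => W (u s)) (deriv W (u r) * u1 r) r :=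
      ((hWd (u r)).hasDerivAt).comp r (hu' r)
    have h := (h1.add h2).sub h3
    rw [hEn_def]
    refine h.congr_deriv ?_
    rw [hODE r hr]
    field_simp
    ring
  have hEncont : Continuous En := by
    rw [hEn_def]
    exact (((hu1cont.pow 2).div_const 2).add (continuous_const.mul (huC2.continuous.pow 2))).sub
      (hW.continuous.comp huC2.continuous)
  have hcurve : Tendsto (fun r : ℝ => r • e0) atTop
      (cocompact (EuclideanSpace ℝ (Fin N))) := by
    rw [← Metric.cobounded_eq_cocompact, ← tendsto_norm_atTop_iff_cobounded]
    simp only [hnsmul]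
    exact tendsto_abs_atTop_atTop
  have hulim : Tendsto u atTop (nhds 0) := hdecay.comp hcurve
  have hu1lim : Tendsto u1 atTop (nhds 0) := by
    apply squeeze_zero_norm ?_ (hdecay'.comp hcurve)
    intro r
    rw [hu1_def]
    calc ‖fderiv ℝ U (r • e0) e0‖ ≤ ‖fderiv ℝ U (r • e0)‖ * ‖e0‖ :=
          (fderiv ℝ U (r • e0)).le_opNorm e0
      _ = ‖fderiv ℝ U (r • e0)‖ := by rw [hne0, mul_one]
  have hElim : Tendsto En atTop (nhds 0) := by
    have h := (((hu1lim.pow 2).div_const 2).add ((hulim.pow 2).const_mul ω)).sub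
      ((hW.continuous.tendsto (0:ℝ)).comp hulim)
    rw [hEn_def]
    simpa [hW0] using h
  have hanti : AntitoneOn En (Set.Ici (0:ℝ)) := by
    apply antitoneOn_of_deriv_nonpos (convex_Ici 0) hEncont.continuousOn
    · intro x hx
      rw [interior_Ici] at hx
      exact (hEn' x hx).differentiableAt.differentiableWithinAt
    · intro x hx
      rw [interior_Ici] at hx
      rw [(hEn' x hx).deriv]
      have hN1 : (0:ℝ) ≤ (N:ℝ) - 1 := by
        have : (3:ℝ) ≤ (N:ℝ) := by exact_mod_cast hN
        linarith
      have : 0 ≤ ((N:ℝ)-1) * u1 x ^ 2 / x :=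
        div_nonneg (mul_nonneg hN1 (sq_nonneg _)) hx.le
      linarith
  have hEnonneg : ∀ r : ℝ, 0 ≤ r → 0 ≤ En r := by
    intro r hr
    refine le_of_tendsto hElim ?_
    filter_upwards [eventually_ge_atTop r] with s hs
    exact hanti hr (le_trans hr hs) hs
  have hu1zero0 : u1 0 = 0 := by
    have h1 : HasDerivAt (fun s : ℝ => u (-s)) (u1 0 * (-1)) 0 := by
      have hu0 : HasDerivAt u (u1 0) (-(0:ℝ)) := by rw [neg_zero]; exact hu' 0
      exact hu0.comp 0 (hasDerivAt_neg 0)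
    rw [funext heven] at h1
    have := h1.unique (hu' 0)
    linarith
  have hE0 : En 0 = 0 := by
    refine le_antisymm ?_ (hEnonneg 0 le_rfl)
    have h1 : ω * u 0 ^ 2 ≤ 0 := mul_nonpos_of_nonpos_of_nonneg hω (sq_nonneg _)
    have h2 : 0 ≤ W (u 0) := by
      rw [hu_def]; exact hWpos _ (hUnonneg _)
    rw [hEn_def]
    simp only [hu1zero0]
    norm_num
    linarith
  have hEzero : ∀ r : ℝ, 0 ≤ r → En r = 0 := by
    intro r hr
    refine le_antisymm ?_ (hEnonneg r hr)
    have := hanti (Set.self_mem_Ici) hr hr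
    linarith [hE0]
  have hu1pos : ∀ r : ℝ, 0 < r → u1 r = 0 := by
    intro r hr
    have hloc : En =ᶠ[nhds r] fun _ => 0 := by
      filter_upwards [Ioi_mem_nhds hr] with s hs
      exact hEzero s (le_of_lt hs)
    have h0 : HasDerivAt En 0 r := (hasDerivAt_const r (0:ℝ)).congr_of_eventuallyEq hloc
    have h1 := (hEn' r hr).unique h0
    have hN1 : (0:ℝ) < (N:ℝ) - 1 := by
      have : (3:ℝ) ≤ (N:ℝ) := by exact_mod_cast hN
      linarith
    have h2 : u1 r ^ 2 = 0 := by
      have h3 : ((N:ℝ)-1) * u1 r ^ 2 / r = 0 := by linarith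
      rw [div_eq_zero_iff] at h3
      rcases h3 with h3 | h3
      · rcases mul_eq_zero.mp h3 with h4 | h4
        · linarith
        · exact h4
      · exact absurd h3 hr.ne'
    exact pow_eq_zero_iff (by norm_num : (2:ℕ) ≠ 0) |>.mp h2
  have hu1all : ∀ r : ℝ, u1 r = 0 := by
    intro r
    rcases lt_trichotomy r 0 with hr | hr | hr
    · have h1 : HasDerivAt (fun s : ℝ => u (-s)) (u1 (-r) * (-1)) r := by
        have hu0 : HasDerivAt u (u1 (-r)) (-r) := hu' (-r)
        exact hu0.comp r (hasDerivAt_neg r)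
      rw [funext heven] at h1
      have := h1.unique (hu' r)
      have h2 : u1 (-r) = 0 := hu1pos (-r) (by linarith)
      rw [h2] at this
      linarith
    · rw [hr]; exact hu1zero0
    · exact hu1pos r hr
  have hconst : ∀ x y : ℝ, u x = u y :=
    is_const_of_deriv_eq_zero (huC2.differentiable (by norm_num))
      (fun x => by rw [(hu' x).deriv]; exact hu1all x)
  have hu0 : u 0 = 0 := by
    have hc : Tendsto u atTop (nhds (u 0)) := by
      have : u = fun _ => u 0 := funext fun x => hconst x 0
      rw [this]
      exact tendsto_const_nhds
    exact tendsto_nhds_unique hc hulim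
  intro x
  rw [hrad x, hconst ‖x‖ 0, hu0]
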